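/- Let B be a dual Banach algebra and let (q_γ)_{γ ∈ Γ} be a bounded net in B such that for each γ, the net (q_ω q_γ)_ω converges in norm to q_γ. If U is an ultrafilter on Γ extending the order filter, then the weak* limit p = w*-lim_{γ → U} q_γ exists in B and p is an idempotent. -/

import Mathlib

open Filter NormedSpace

/-- Let `B` be a dual Banach algebra, realised as the dual of a Banach space `E` via an
isometric isomorphism `ι` for which multiplication is separately weak*-continuous. If
`(q_γ)` is a bounded net in `B` such that `(q_ω q_γ)_ω → q_γ` in norm for each `γ`, and
`U` is an ultrafilter extending the order filter, then the weak* limit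
`p = w*-lim_{γ → U} q_γ` exists in `B` and is an idempotent. -/
theorem wstar_limit_idempotent
    {B E : Type*}
    [NormedRing B] [NormedAlgebra ℂ B] [CompleteSpace B]
    [NormedAddCommGroup E] [NormedSpace ℂ E] [CompleteSpace E]
    -- `B` is a dual Banach algebra with predual `E`:
    (ι : B ≃ₗᵢ[ℂ] StrongDual ℂ E)
    (hmul_left : ∀ b : B, Continuous fun φ : WeakDual ℂ E =>
      StrongDual.toWeakDual (ι (b * ι.symm (StrongDual.toWeakDual.symm φ))))
    (hmul_right : ∀ b : B, Continuous fun φ : WeakDual ℂ E =>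
      StrongDual.toWeakDual (ι (ι.symm (StrongDual.toWeakDual.symm φ) * b)))
    -- `(q γ)` is a bounded net:
    {Γ : Type*} [Preorder Γ] [IsDirected Γ (· ≤ ·)] [Nonempty Γ]
    (q : Γ → B) (hbd : ∃ C : ℝ, ∀ γ, ‖q γ‖ ≤ C)
    (hconv : ∀ γ : Γ, Tendsto (fun ω => q ω * q γ) atTop (nhds (q γ)))
    (U : Ultrafilter Γ) (hU : (atTop : Filter Γ) ≤ (U : Filter Γ)) :
    ∃ p : B,
      (∀ x : E, Tendsto (fun γ => ι (q γ) x) (U : Filter Γ) (nhds (ι p x))) ∧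
      IsIdempotentElem p := by
  obtain ⟨C, hC⟩ := hbd
  set f : Γ → WeakDual ℂ E := fun γ => StrongDual.toWeakDual (ι (q γ)) with hf
  -- the net lives in a weak*-compact ball (Banach–Alaoglu)
  have hK : IsCompact (WeakDual.toStrongDual ⁻¹' Metric.closedBall (0 : StrongDual ℂ E) C) :=
    WeakDual.isCompact_closedBall (𝕜 := ℂ) (E := E) 0 C
  have hmem : ∀ γ, f γ ∈ WeakDual.toStrongDual ⁻¹' Metric.closedBall (0 : StrongDual ℂ E) C := by
    intro γ
    simp only [Set.mem_preimage, Metric.mem_closedBall, dist_zero_right]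
    have h2 : ‖ι (q γ)‖ = ‖q γ‖ := ι.norm_map _
    calc ‖WeakDual.toStrongDual (f γ)‖ = ‖q γ‖ := h2
    _ ≤ C := hC γ
  obtain ⟨φ, -, hφ⟩ := hK.ultrafilter_le_nhds (U.map f)
    (by rw [Filter.le_principal_iff, Ultrafilter.coe_map, Filter.mem_map]; exact Filter.univ_mem' hmem)
  have hφ' : Tendsto f (U : Filter Γ) (nhds φ) := by
    rw [Filter.Tendsto, ← Ultrafilter.coe_map]; exact hφ
  set p : B := ι.symm (StrongDual.toWeakDual.symm φ) with hp
  have hιp : StrongDual.toWeakDual (ι p) = φ := by simp [p]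
  have key : ∀ ω, ι.symm (StrongDual.toWeakDual.symm (f ω)) = q ω := by
    intro ω
    simp only [hf, LinearEquiv.symm_apply_apply, LinearIsometryEquiv.symm_apply_apply]
  -- norm convergence implies weak* convergence, and push U-limits to atTop via hU
  have hcont : Continuous fun b : B => StrongDual.toWeakDual (ι b) :=
    NormedSpace.Dual.toWeakDual_continuous.comp ι.continuous
  -- p * q γ = q γ for all γ
  have hleft : ∀ γ, p * q γ = q γ := by
    intro γ
    have h1 : Tendsto (fun ω => StrongDual.toWeakDual (ι (q ω * q γ))) atTop
        (nhds (StrongDual.toWeakDual (ι (p * q γ)))) := by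
      have h := (((hmul_right (q γ)).tendsto φ).comp hφ').mono_left hU
      refine (h.congr fun ω => ?_)
      simp only [Function.comp_apply, key]
    have h2 : Tendsto (fun ω => StrongDual.toWeakDual (ι (q ω * q γ))) atTop
        (nhds (StrongDual.toWeakDual (ι (q γ)))) :=
      (hcont.tendsto (q γ)).comp (hconv γ)
    have h3 := tendsto_nhds_unique h1 h2
    exact ι.injective (StrongDual.toWeakDual.injective h3)
  -- idempotency
  have hidem : p * p = p := by
    have h1 : Tendsto (fun ω => StrongDual.toWeakDual (ι (p * q ω))) atTop
        (nhds (StrongDual.toWeakDual (ι (p * p)))) := by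
      have h := (((hmul_left p).tendsto φ).comp hφ').mono_left hU
      exact h.congr fun ω => by simp only [Function.comp_apply, key]
    have h2 : Tendsto (fun ω => StrongDual.toWeakDual (ι (p * q ω))) atTop
        (nhds (StrongDual.toWeakDual (ι p))) := by
      have heq : (fun ω => StrongDual.toWeakDual (ι (p * q ω))) = f := by
        funext ω; simp [hleft, f]
      have h2' := hφ'.mono_left hU
      rw [← heq] at h2'
      rw [hιp]
      exact h2'
    have h3 := tendsto_nhds_unique h1 h2
    exact ι.injective (StrongDual.toWeakDual.injective h3)
  refine ⟨p, fun x => ?_, hidem⟩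
  have h := ((WeakDual.eval_continuous x).tendsto φ).comp hφ'
  rw [← hιp] at h
  exact h
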